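/- Let Φ be an affine root system, c a Coxeter element in its Weyl group, and s a simple reflection that is initial or final in c. Then γ_{scs} = s·γ_c if s ≠ s_aff, and γ_{scs} = t_θ·γ_c if s = s_aff. -/

import Mathlib

open scoped BigOperators

noncomputable section

/-- A symmetrizable generalized Cartan matrix of affine type, together with the
coefficient vector `dz` of the primitive positive imaginary root `δ` spanning the
(one dimensional) kernel of the associated symmetric bilinear form. -/
structure AffineGCM (n : ℕ) where
  /-- the generalized Cartan matrix -/
  a : Matrix (Fin n) (Fin n) ℤ
  /-- symmetrizing factors -/
  d : Fin n → ℝ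
  diag : ∀ i, a i i = 2
  offdiag : ∀ i j, i ≠ j → a i j ≤ 0
  d_pos : ∀ i, 0 < d i
  symmetrizable : ∀ i j, d i * (a i j : ℝ) = d j * (a j i : ℝ)
  /-- `K` is positive semidefinite (on the real span of the simple roots) -/
  posSemidef : ∀ g : Fin n → ℝ, 0 ≤ ∑ i, ∑ j, g i * g j * (d i * (a i j : ℝ))
  /-- `K` is not positive definite -/
  not_posDef : ∃ g : Fin n → ℝ, g ≠ 0 ∧ ∑ i, ∑ j, g i * g j * (d i * (a i j : ℝ)) = 0
  /-- the restriction of `K` to the span of every proper subset of the simple roots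
  is positive definite -/
  proper_posDef : ∀ J : Finset (Fin n), J ≠ Finset.univ →
    ∀ g : Fin n → ℝ, (∀ i, i ∉ J → g i = 0) → g ≠ 0 →
      0 < ∑ i, ∑ j, g i * g j * (d i * (a i j : ℝ))
  /-- coordinates of the positive imaginary root `δ` in the basis of simple roots -/
  dz : Fin n → ℤ
  dz_pos : ∀ i, 0 < dz i
  /-- `δ` is the imaginary root closest to the origin: its coordinates are coprime -/
  dz_prim : Finset.univ.gcd dz = 1
  /-- `δ` spans the kernel of `K` -/
  dz_ker : ∀ j, ∑ i, (dz i : ℝ) * (d i * (a i j : ℝ)) = 0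

namespace AffineGCM

variable {n : ℕ}

/-- The ambient vector space `V`, with the simple roots as standard basis. -/
abbrev V (n : ℕ) := Fin n → ℂ

/-- the simple root `α i` (the `i`-th standard basis vector) -/
def α (i : Fin n) : V n := Pi.single i 1

/-- a vector is *positive* if it lies in the nonnegative real span of the simple roots -/
def IsPosRoot (v : V n) : Prop := ∀ i, 0 ≤ (v i).re ∧ (v i).im = 0

/-- a vector is *negative* if it lies in the nonpositive real span of the simple roots -/
def IsNegRoot (v : V n) : Prop := ∀ i, (v i).re ≤ 0 ∧ (v i).im = 0

/-- the `g`-orbit of `x`: all `g ^ k • x` for integers `k` -/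
def orbit (g : V n ≃ₗ[ℂ] V n) (x : V n) : Set (V n) := Set.range fun k : ℤ => (g ^ k) x

/-- `U g`: the span of all eigenvectors of `g`, i.e. the direct sum of its eigenspaces -/
def eigSpan (g : V n ≃ₗ[ℂ] V n) : Submodule ℂ (V n) :=
  ⨆ μ : ℂ, Module.End.eigenspace (g : Module.End ℂ (V n)) μ

/-- the span `V_fin` of the simple roots other than `α aff` -/
def Vfin (aff : Fin n) : Submodule ℂ (V n) :=
  Submodule.span ℂ (α '' {i : Fin n | i ≠ aff})

variable (C : AffineGCM n)

/-- the simple coroot `α i ^ ∨ = (d i)⁻¹ • α i` -/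
def coroot (i : Fin n) : V n := ((C.d i : ℂ))⁻¹ • α i

/-- The symmetric bilinear form `K`, determined by `K (coroot i) (α j) = a i j`,
that is, `K (α i) (α j) = d i * a i j`. -/
def K : V n →ₗ[ℂ] V n →ₗ[ℂ] ℂ :=
  LinearMap.mk₂ ℂ
    (fun x y => ∑ i, ∑ j, x i * y j * ((C.d i : ℂ) * (C.a i j : ℂ)))
    (fun x x' y => by
      simp only [Pi.add_apply, add_mul, Finset.sum_add_distrib])
    (fun r x y => by
      simp only [Pi.smul_apply, smul_eq_mul, Finset.mul_sum]
      exact Finset.sum_congr rfl fun i _ => Finset.sum_congr rfl fun j _ => by ring)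
    (fun x y y' => by
      simp only [Pi.add_apply, mul_add, add_mul, Finset.sum_add_distrib])
    (fun r x y => by
      simp only [Pi.smul_apply, smul_eq_mul, Finset.mul_sum]
      exact Finset.sum_congr rfl fun i _ => Finset.sum_congr rfl fun j _ => by ring)

/-- the linear map `v ↦ v - K x v • y`; reflections are special cases -/
def reflMap (x y : V n) : V n →ₗ[ℂ] V n where
  toFun v := v - C.K x v • y
  map_add' u v := by simp only [map_add, add_smul]; abel
  map_smul' r u := by simp only [map_smul, smul_eq_mul, RingHom.id_apply, smul_sub, smul_smul]

lemma reflMap_apply (x y v : V n) : C.reflMap x y v = v - C.K x v • y := rfl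

/-- the simple reflection `s i` as a linear endomorphism -/
def sLin (i : Fin n) : V n →ₗ[ℂ] V n := C.reflMap (C.coroot i) (α i)

lemma K_α_α (i j : Fin n) : C.K (α i) (α j) = (C.d i : ℂ) * (C.a i j : ℂ) := by
  simp [K, α, LinearMap.mk₂_apply, Pi.single_apply, ite_mul, zero_mul,
    Finset.sum_ite_eq', Finset.mem_univ]

lemma K_coroot_α (i j : Fin n) : C.K (C.coroot i) (α j) = (C.a i j : ℂ) := by
  have hd : (C.d i : ℂ) ≠ 0 := by exact_mod_cast ne_of_gt (C.d_pos i)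
  simp only [coroot, map_smul, LinearMap.smul_apply, smul_eq_mul, K_α_α]
  field_simp

lemma sLin_invol (i : Fin n) (v : V n) : C.sLin i (C.sLin i v) = v := by
  have h2 : C.K (C.coroot i) (α i) = 2 := by
    rw [K_coroot_α, C.diag]; norm_num
  simp only [sLin, reflMap_apply, map_sub, map_smul, h2, smul_eq_mul]
  module

/-- the simple reflection `s i` -/
def s (i : Fin n) : V n ≃ₗ[ℂ] V n :=
  LinearEquiv.ofLinear (C.sLin i) (C.sLin i)
    (LinearMap.ext fun v => C.sLin_invol i v) (LinearMap.ext fun v => C.sLin_invol i v)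

/-- the Weyl group `W`, as a subgroup of the group of linear automorphisms of `V` -/
def Wgroup : Subgroup (V n ≃ₗ[ℂ] V n) := Subgroup.closure (Set.range C.s)

/-- the Coxeter element `c = s 1 * s 2 * ⋯ * s n` -/
def cox : V n ≃ₗ[ℂ] V n := (List.ofFn C.s).prod

/-- the positive imaginary root `δ` -/
def δv : V n := fun i => ((C.dz i : ℤ) : ℂ)

/-- the set of real roots: `W`-images of the simple roots -/
def realRoots : Set (V n) := {v | ∃ w ∈ C.Wgroup, ∃ i, w (α i) = v}

/-- the root system `Φ`: real roots together with the imaginary roots `k • δ`, `k ≠ 0` -/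
def Φ : Set (V n) := C.realRoots ∪ {v | ∃ k : ℤ, k ≠ 0 ∧ v = (k : ℂ) • C.δv}

/-- `T→ = {α 1, s 1 α 2, …, s 1 ⋯ s (n-1) α n}` -/
def Tproj : Set (V n) :=
  Set.range fun k : Fin n => ((List.ofFn C.s).take k.val).prod (α k)

/-- `T← = {α n, s n α (n-1), …, s n ⋯ s 2 α 1}` -/
def Tinj : Set (V n) :=
  Set.range fun k : Fin n => ((List.ofFn C.s).reverse.take (n - 1 - k.val)).prod (α k)

/-- `Φ_fin`, the finite root system `Φ ∩ V_fin` -/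
def Φfin (aff : Fin n) : Set (V n) := C.Φ ∩ (Vfin aff : Set (V n))

/-- the root `θ = δ - [δ : α aff] • α aff` of `Φ_fin` -/
def θv (aff : Fin n) : V n := C.δv - ((C.dz aff : ℤ) : ℂ) • α aff

/-- the reflection `t β : v ↦ v - K (β^∨) v • β` in a (real) root `β`,
where `β^∨ = (2 / K β β) • β` -/
def tRefl (β : V n) : V n →ₗ[ℂ] V n := C.reflMap ((2 / C.K β β) • β) β

/-- `c_◁ = s 1 * ⋯ * s (aff - 1)` -/
def cleft (aff : Fin n) : V n →ₗ[ℂ] V n := ((List.ofFn C.sLin).take aff.val).prod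

/-- `c_▷ = s (aff + 1) * ⋯ * s n` -/
def cright (aff : Fin n) : V n →ₗ[ℂ] V n := ((List.ofFn C.sLin).drop (aff.val + 1)).prod

/-- `Υ^fin = Φ_fin ∩ U c` -/
def Υfin (aff : Fin n) : Set (V n) := C.Φfin aff ∩ (eigSpan C.cox : Set (V n))

/-- `B` is a simple system for a set `Θ` of roots: a linearly independent subset of `Θ`
such that every element of `Θ` is a nonnegative or a nonpositive combination of `B`. -/
def IsSimpleSystem (Θ : Set (V n)) (B : Finset (V n)) : Prop :=
  ↑B ⊆ Θ ∧ LinearIndependent ℂ (fun b : B => (b : V n)) ∧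
    ∀ v ∈ Θ, ∃ g : V n → ℝ, ((∀ b ∈ B, 0 ≤ g b) ∨ (∀ b ∈ B, g b ≤ 0)) ∧
      v = ∑ b ∈ B, (g b : ℂ) • b

/-- two roots of `Θ` are connected if they are joined by a chain of roots of `Θ`
that are pairwise non-orthogonal (with respect to `K`) -/
def Connected (Θ : Set (V n)) (x y : V n) : Prop :=
  Relation.ReflTransGen (fun u v => u ∈ Θ ∧ v ∈ Θ ∧ C.K u v ≠ 0) x y

/-- the irreducible component of `x` in `Θ` -/
def component (Θ : Set (V n)) (x : V n) : Set (V n) := {y | y ∈ Θ ∧ C.Connected Θ x y}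

/-- a set of roots is of finite type `A` if it consists exactly of the vectors
`±(β i + β (i+1) + ⋯ + β j)` for a linearly independent family `β 1, …, β k` -/
def IsTypeA (Θ : Set (V n)) : Prop :=
  ∃ (k : ℕ) (β : Fin k → V n), LinearIndependent ℂ β ∧ (∀ i, β i ∈ Θ) ∧
    Θ = {v | ∃ i j : Fin k, i ≤ j ∧
      (v = ∑ l ∈ Finset.Icc i j, β l ∨ v = -∑ l ∈ Finset.Icc i j, β l)}

/-- `Ω = {β 1, t (β 1) (β 2), …, t (β 1) ⋯ t (β (m-1)) (β m)}` for an ordered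
tuple `β` of roots -/
def Ωset {m : ℕ} (β : Fin m → V n) : Set (V n) :=
  Set.range fun j : Fin m => (((List.ofFn fun i => C.tRefl (β i)).take j.val).prod) (β j)

/-- `s i` is initial in a Coxeter element `c` if `c` is the product of a permutation
of all the simple reflections starting with `s i` -/
def IsInitial (i : Fin n) (c : V n ≃ₗ[ℂ] V n) : Prop :=
  ∃ l : List (Fin n), (i :: l).Perm (List.finRange n) ∧ ((i :: l).map C.s).prod = c

/-- `s i` is final in a Coxeter element `c` if `c` is the product of a permutation
of all the simple reflections ending with `s i` -/
def IsFinal (i : Fin n) (c : V n ≃ₗ[ℂ] V n) : Prop :=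
  ∃ l : List (Fin n), (l ++ [i]).Perm (List.finRange n) ∧ ((l ++ [i]).map C.s).prod = c

/-- the skew-symmetric bilinear form `ω_c`, determined by
`ω_c (coroot i) (α j) = a i j` if `i > j`, `= 0` if `i = j`, `= -a i j` if `i < j` -/
def ω : V n →ₗ[ℂ] V n →ₗ[ℂ] ℂ :=
  LinearMap.mk₂ ℂ
    (fun x y => ∑ i, ∑ j, x i * y j *
      ((if j < i then 1 else if i = j then 0 else -1) * ((C.d i : ℂ) * (C.a i j : ℂ))))
    (fun x x' y => by
      simp only [Pi.add_apply, add_mul, Finset.sum_add_distrib])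
    (fun r x y => by
      simp only [Pi.smul_apply, smul_eq_mul, Finset.mul_sum]
      exact Finset.sum_congr rfl fun i _ => Finset.sum_congr rfl fun j _ => by ring)
    (fun x y y' => by
      simp only [Pi.add_apply, mul_add, add_mul, Finset.sum_add_distrib])
    (fun r x y => by
      simp only [Pi.smul_apply, smul_eq_mul, Finset.mul_sum]
      exact Finset.sum_congr rfl fun i _ => Finset.sum_congr rfl fun j _ => by ring)

/-! ### Auxiliary lemmas -/

lemma s_apply (i : Fin n) (v : V n) : C.s i v = v - C.K (C.coroot i) v • α i := rfl

lemma K_apply (x y : V n) :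
    C.K x y = ∑ i, ∑ j, x i * y j * ((C.d i : ℂ) * (C.a i j : ℂ)) := rfl

lemma da_symm (i j : Fin n) :
    (C.d i : ℂ) * (C.a i j : ℂ) = (C.d j : ℂ) * (C.a j i : ℂ) := by
  exact_mod_cast congrArg Complex.ofReal (C.symmetrizable i j)

lemma K_symm (x y : V n) : C.K x y = C.K y x := by
  rw [K_apply, K_apply, Finset.sum_comm]
  refine Finset.sum_congr rfl fun i _ => Finset.sum_congr rfl fun j _ => ?_
  rw [da_symm C j i]; ring

lemma eq_sum_single (v : V n) : v = ∑ j, v j • α j := by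
  funext m
  simp [α, Finset.sum_apply, Pi.single_apply]

lemma K_right_expand (x v : V n) : C.K x v = ∑ j, v j * C.K x (α j) := by
  conv_lhs => rw [eq_sum_single v]
  rw [map_sum]
  exact Finset.sum_congr rfl fun j _ => by rw [map_smul, smul_eq_mul]

lemma K_left_expand (x v : V n) : C.K x v = ∑ i, x i * C.K (α i) v := by
  rw [K_symm, K_right_expand]
  exact Finset.sum_congr rfl fun i _ => by rw [K_symm]

lemma K_coroot_eq (i : Fin n) (v : V n) :
    C.K (C.coroot i) v = ((C.d i : ℂ))⁻¹ * C.K (α i) v := by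
  rw [coroot, map_smul, LinearMap.smul_apply, smul_eq_mul]

lemma K_coroot_apply (i : Fin n) (v : V n) :
    C.K (C.coroot i) v = ∑ j, (C.a i j : ℂ) * v j := by
  have hd : (C.d i : ℂ) ≠ 0 := by exact_mod_cast ne_of_gt (C.d_pos i)
  rw [K_coroot_eq, K_right_expand, Finset.mul_sum]
  refine Finset.sum_congr rfl fun j _ => ?_
  rw [K_α_α]
  field_simp

lemma K_δ_α (j : Fin n) : C.K C.δv (α j) = 0 := by
  rw [K_left_expand]
  have h : ∑ i, (C.dz i : ℝ) * (C.d i * (C.a i j : ℝ)) = 0 := C.dz_ker j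
  have h2 : ((∑ i, (C.dz i : ℝ) * (C.d i * (C.a i j : ℝ)) : ℝ) : ℂ) = 0 := by
    rw [h]; norm_num
  rw [Complex.ofReal_sum] at h2
  rw [← h2]
  refine Finset.sum_congr rfl fun i _ => ?_
  rw [K_α_α]
  show (C.δv i) * _ = _
  simp [δv]

lemma K_δ_left (v : V n) : C.K C.δv v = 0 := by
  rw [K_right_expand]
  simp [K_δ_α]

lemma K_δ_right (v : V n) : C.K v C.δv = 0 := by
  rw [K_symm]; exact C.K_δ_left v

lemma s_δ (i : Fin n) : C.s i C.δv = C.δv := by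
  have h : C.K (C.coroot i) C.δv = 0 := by rw [K_symm]; exact C.K_δ_left _
  rw [s_apply, h]
  simp

lemma listprod_fix_δ (l : List (Fin n)) : ((l.map C.s).prod) C.δv = C.δv := by
  induction l with
  | nil => simp
  | cons a t ih =>
    rw [List.map_cons, List.prod_cons]
    have : (C.s a * (t.map C.s).prod) C.δv = C.s a (((t.map C.s).prod) C.δv) := rfl
    rw [this, ih, s_δ]

lemma cox_δ : C.cox C.δv = C.δv := by
  rw [cox, List.ofFn_eq_map]
  exact C.listprod_fix_δ _

lemma listprod_coord (l : List (Fin n)) (j : Fin n) (hj : j ∉ l) (v : V n) :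
    (((l.map C.s).prod) v) j = v j := by
  induction l with
  | nil => simp
  | cons a t ih =>
    have hja : j ≠ a := fun h => hj (h ▸ List.mem_cons_self)
    have hjt : j ∉ t := fun h => hj (List.mem_cons_of_mem a h)
    rw [List.map_cons, List.prod_cons]
    have h1 : (C.s a * (t.map C.s).prod) v = C.s a (((t.map C.s).prod) v) := rfl
    rw [h1, s_apply]
    have : (α a : V n) j = 0 := by simp [α, Pi.single_apply, hja]
    simp only [Pi.sub_apply, Pi.smul_apply, this, smul_eq_mul, mul_zero, sub_zero]
    exact ih hjt

lemma listprod_fix_orth (l : List (Fin n)) (hl : l.Nodup) (v : V n)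
    (hv : ((l.map C.s).prod) v = v) : ∀ j ∈ l, C.K (C.coroot j) v = 0 := by
  induction l with
  | nil => intro j hj; simp at hj
  | cons a t ih =>
    rw [List.map_cons, List.prod_cons] at hv
    have h1 : (C.s a * (t.map C.s).prod) v = C.s a (((t.map C.s).prod) v) := rfl
    rw [h1] at hv
    have hat : a ∉ t := (List.nodup_cons.mp hl).1
    have hnt : t.Nodup := (List.nodup_cons.mp hl).2
    set w := ((t.map C.s).prod) v with hw
    have hwa : w a = v a := C.listprod_coord t a hat v
    have hKa : C.K (C.coroot a) w = 0 := by
      have h2 : (C.s a w) a = v a := by rw [hv]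
      rw [s_apply] at h2
      have hαa : (α a : V n) a = 1 := by simp [α]
      simp only [Pi.sub_apply, Pi.smul_apply, hαa, smul_eq_mul, mul_one] at h2
      rw [hwa] at h2
      exact sub_eq_self.mp h2
    have hsw : C.s a w = w := by rw [s_apply, hKa]; simp
    have hwv : w = v := by rw [← hv, hsw]
    intro j hj
    rcases List.mem_cons.mp hj with h | h
    · rw [h, ← hwv]; exact hKa
    · exact ih hnt hwv j h

lemma real_kernel_zero (aff : Fin n) (g : Fin n → ℝ)
    (hker : ∀ i, ∑ j, (C.a i j : ℝ) * g j = 0) (h0 : g aff = 0) : g = 0 := by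
  by_contra hg
  have hJ : (Finset.univ.erase aff : Finset (Fin n)) ≠ Finset.univ := by
    intro h
    have := Finset.mem_univ aff
    rw [← h] at this
    exact (Finset.notMem_erase aff _) this
  have hzero : ∀ i, i ∉ (Finset.univ.erase aff : Finset (Fin n)) → g i = 0 := by
    intro i hi
    have : i = aff := by
      by_contra h
      exact hi (Finset.mem_erase.mpr ⟨h, Finset.mem_univ i⟩)
    rw [this]; exact h0
  have hpos := C.proper_posDef _ hJ g hzero hg
  have hsum : ∑ i, ∑ j, g i * g j * (C.d i * (C.a i j : ℝ)) = 0 := by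
    refine Finset.sum_eq_zero fun i _ => ?_
    have : ∑ j, g i * g j * (C.d i * (C.a i j : ℝ))
        = (g i * C.d i) * ∑ j, (C.a i j : ℝ) * g j := by
      rw [Finset.mul_sum]
      exact Finset.sum_congr rfl fun j _ => by ring
    rw [this, hker i, mul_zero]
  rw [hsum] at hpos
  exact lt_irrefl 0 hpos

lemma kernel_coord_zero (aff : Fin n) (v : V n)
    (hker : ∀ j, C.K (C.coroot j) v = 0) (h0 : v aff = 0) : v = 0 := by
  have hre : (fun j => (v j).re) = 0 := by
    refine C.real_kernel_zero aff _ (fun i => ?_) (by simp [h0])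
    have := hker i
    rw [K_coroot_apply] at this
    have h2 := congrArg Complex.re this
    rw [Complex.re_sum] at h2
    simpa using h2
  have him : (fun j => (v j).im) = 0 := by
    refine C.real_kernel_zero aff _ (fun i => ?_) (by simp [h0])
    have := hker i
    rw [K_coroot_apply] at this
    have h2 := congrArg Complex.im this
    rw [Complex.im_sum] at h2
    simpa using h2
  funext j
  have h1 := congrFun hre j
  have h2 := congrFun him j
  simp only [Pi.zero_apply] at h1 h2 ⊢
  exact Complex.ext h1 h2

lemma Vfin_coord {aff : Fin n} {v : V n} (hv : v ∈ Vfin aff) : v aff = 0 := by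
  have hle : Vfin aff ≤ LinearMap.ker (LinearMap.proj aff : V n →ₗ[ℂ] ℂ) := by
    rw [Vfin, Submodule.span_le]
    rintro _ ⟨j, hj, rfl⟩
    simp only [SetLike.mem_coe, LinearMap.mem_ker, LinearMap.proj_apply]
    simp only [Set.mem_setOf_eq] at hj
    exact Pi.single_eq_of_ne (Ne.symm hj) 1
  exact hle hv

lemma s_mul_self (i : Fin n) : C.s i * C.s i = 1 := by
  apply LinearEquiv.toLinearMap_injective
  apply LinearMap.ext
  intro v
  exact C.sLin_invol i v

lemma gamma_unique (aff : Fin n) (l : List (Fin n)) (hnd : l.Nodup)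
    (hall : ∀ j : Fin n, j ∈ l) (x y : V n) (hx0 : x aff = 0) (hy0 : y aff = 0)
    (hx : ((l.map C.s).prod) x - x = C.δv) (hy : ((l.map C.s).prod) y - y = C.δv) :
    x = y := by
  set w := (l.map C.s).prod with hw
  have hfix : w (x - y) = x - y := by
    rw [map_sub]
    have h1 : w x = C.δv + x := by rw [← hx]; abel
    have h2 : w y = C.δv + y := by rw [← hy]; abel
    rw [h1, h2]; abel
  have horth := C.listprod_fix_orth l hnd (x - y) hfix
  have := C.kernel_coord_zero aff (x - y) (fun j => horth j (hall j))
    (by simp [Pi.sub_apply, hx0, hy0])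
  exact sub_eq_zero.mp this

/-- Proposition 3.2: if `s` is initial or final in `c`, then `γ_(s c s) = s γ_c`
when `s ≠ s_aff`, and `γ_(s c s) = t_θ γ_c` when `s = s_aff`. -/
theorem gamma_source_sink {n : ℕ} (C : AffineGCM n) (aff : Fin n)
    (haff : ((Subgroup.closure (C.s '' {j : Fin n | j ≠ aff}) : Subgroup (V n ≃ₗ[ℂ] V n)) : Set (V n ≃ₗ[ℂ] V n)).Finite)
    (i : Fin n) (hi : C.IsInitial i C.cox ∨ C.IsFinal i C.cox)
    (γ γ' : V n) (hγ : γ ∈ Vfin aff) (hγ1 : C.cox γ - γ = C.δv)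
    (hγ' : γ' ∈ Vfin aff) (hγ'1 : (C.s i * C.cox * C.s i) γ' - γ' = C.δv) :
    (i ≠ aff → γ' = C.s i γ) ∧ (i = aff → γ' = C.tRefl (C.θv aff) γ) := by
  obtain ⟨l', hperm, hprodeq⟩ :
      ∃ l' : List (Fin n), l'.Perm (List.finRange n) ∧
        C.s i * C.cox * C.s i = ((l'.map C.s).prod) := by
    rcases hi with ⟨l, hp, hc⟩ | ⟨l, hp, hc⟩
    · refine ⟨l ++ [i], (List.perm_append_singleton i l).trans hp, ?_⟩
      rw [List.map_cons, List.prod_cons] at hc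
      rw [← hc, List.map_append, List.prod_append, List.map_singleton,
        List.prod_singleton, ← mul_assoc (C.s i) (C.s i), s_mul_self, one_mul]
    · refine ⟨i :: l, (List.perm_append_singleton i l).symm.trans hp, ?_⟩
      rw [List.map_append, List.prod_append, List.map_singleton,
        List.prod_singleton] at hc
      rw [← hc, List.map_cons, List.prod_cons, mul_assoc, mul_assoc,
        s_mul_self, mul_one]
  have hnd : l'.Nodup := hperm.nodup_iff.mpr (List.nodup_finRange n)
  have hall : ∀ j : Fin n, j ∈ l' := fun j => hperm.mem_iff.mpr (List.mem_finRange j)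
  have hγaff : γ aff = 0 := Vfin_coord hγ
  have hγ'aff : γ' aff = 0 := Vfin_coord hγ'
  rw [hprodeq] at hγ'1
  have hcoxγ : C.cox γ = C.δv + γ := by rw [← hγ1]; abel
  constructor
  · intro hne
    have hαiaff : (α i : V n) aff = 0 := Pi.single_eq_of_ne (Ne.symm hne) 1
    have hx0 : (C.s i γ) aff = 0 := by
      rw [s_apply]
      simp [Pi.sub_apply, Pi.smul_apply, hαiaff, hγaff]
    have hsinv : C.s i (C.s i γ) = γ := C.sLin_invol i γ
    have hx1 : ((l'.map C.s).prod) (C.s i γ) - (C.s i γ) = C.δv := by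
      rw [← hprodeq]
      have h1 : (C.s i * C.cox * C.s i) (C.s i γ)
          = C.s i (C.cox (C.s i (C.s i γ))) := rfl
      rw [h1, hsinv, hcoxγ, map_add, s_δ]
      abel
    exact C.gamma_unique aff l' hnd hall γ' (C.s i γ) hγ'aff hx0 hγ'1 hx1
  · intro heq
    subst heq
    set k : ℂ := ((C.dz i : ℤ) : ℂ) with hkdef
    have hdne : (C.d i : ℂ) ≠ 0 := by exact_mod_cast ne_of_gt (C.d_pos i)
    have hkne : k ≠ 0 := by
      rw [hkdef]
      exact_mod_cast ne_of_gt (C.dz_pos i)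
    have hθ : C.θv i = C.δv - k • α i := rfl
    have hKαα : C.K (α i) (α i) = (C.d i : ℂ) * 2 := by
      rw [K_α_α, C.diag]; norm_num
    have hKαδ : C.K (α i) C.δv = 0 := C.K_δ_right _
    set u : ℂ := C.K (α i) γ with hudef
    have hKθ : ∀ v : V n, C.K (C.θv i) v = -(k * C.K (α i) v) := by
      intro v
      rw [hθ, map_sub, map_smul, LinearMap.sub_apply, LinearMap.smul_apply,
        C.K_δ_left, smul_eq_mul]
      ring
    have hKθθ : C.K (C.θv i) (C.θv i) = k * k * ((C.d i : ℂ) * 2) := by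
      rw [hKθ, hθ, map_sub, map_smul, hKαδ, hKαα, smul_eq_mul]
      ring
    have hKθγ : C.K (C.θv i) γ = -(k * u) := by rw [hKθ]
    have hx_expand : C.tRefl (C.θv i) γ
        = γ - ((2 / C.K (C.θv i) (C.θv i)) * C.K (C.θv i) γ) • C.θv i := by
      show C.reflMap _ _ γ = _
      rw [reflMap_apply, map_smul, LinearMap.smul_apply, smul_eq_mul]
    set e : ℂ := u / (k * (C.d i : ℂ)) with hedef
    have hx2 : C.tRefl (C.θv i) γ = C.s i γ + e • C.δv := by
      rw [hedef]
      rw [hx_expand, hKθθ, hKθγ, s_apply, K_coroot_eq, hθ, ← hudef]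
      match_scalars
      · ring
      · field_simp
      · field_simp
    have hθ0 : C.θv i i = 0 := by
      show C.δv i - (k • α i) i = 0
      simp [δv, α, hkdef]
    have hx0 : (C.tRefl (C.θv i) γ) i = 0 := by
      rw [hx_expand]
      simp [Pi.sub_apply, Pi.smul_apply, hθ0, hγaff]
    have hss : C.s i (C.s i γ) = γ := C.sLin_invol i γ
    have hx1 : ((l'.map C.s).prod) (C.tRefl (C.θv i) γ) - C.tRefl (C.θv i) γ
        = C.δv := by
      rw [← hprodeq]
      have step1 : C.s i (C.s i γ + e • C.δv) = γ + e • C.δv := by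
        rw [map_add, map_smul, hss, s_δ]
      have step2 : C.cox (γ + e • C.δv) = C.δv + γ + e • C.δv := by
        rw [map_add, map_smul, hcoxγ, cox_δ]
      have step3 : C.s i (C.δv + γ + e • C.δv) = C.δv + C.s i γ + e • C.δv := by
        rw [map_add, map_add, map_smul, s_δ]
      have h1 : (C.s i * C.cox * C.s i) (C.tRefl (C.θv i) γ)
          = C.s i (C.cox (C.s i (C.tRefl (C.θv i) γ))) := rfl
      rw [h1, hx2, step1, step2, step3]
      abel
    exact C.gamma_unique i l' hnd hall γ' (C.tRefl (C.θv i) γ) hγ'aff hx0 hγ'1 hx1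

end AffineGCM
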